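/- Let n, a, b be integers with n ≥ 3, b ≤ a and na < 2(n+1)b, and let c = ⌊c(n,a,b)⌋. Then for every list assignment L of the path P_{n+1} such that |L_1| = |L_{n+1}| = b, |L_i| = a for 2 ≤ i ≤ n, and |L_i ∩ L_{i+1}| ≤ c for 1 ≤ i ≤ n, there exists an (L,b)-coloring of P_{n+1}. -/

import Mathlib

open SimpleGraph Finset

/-- An `(L,b)`-coloring of `G`: each vertex `v` receives a set `φ v ⊆ L v` with
`|φ v| = b`, and adjacent vertices receive disjoint sets. -/
def IsLbColoring {V : Type*} (G : SimpleGraph V) (L : V → Finset ℕ) (b : ℕ)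
    (φ : V → Finset ℕ) : Prop :=
  (∀ v, φ v ⊆ L v ∧ (φ v).card = b) ∧ ∀ u v, G.Adj u v → φ u ∩ φ v = ∅

/-- `G` is `(a,b,c)`-choosable: every `c`-separating `a`-list assignment admits an
`(L,b)`-coloring. -/
def Choosable {V : Type*} (G : SimpleGraph V) (a b c : ℕ) : Prop :=
  ∀ L : V → Finset ℕ, (∀ v, (L v).card = a) →
    (∀ u v, G.Adj u v → (L u ∩ L v).card ≤ c) →
    ∃ φ, IsLbColoring G L b φ

/-- `G` is `(a,b,c)`-free-choosable: for every `c`-separating `a`-list assignment,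
any precoloring of one vertex by a `b`-subset of its list extends to an `(L,b)`-coloring. -/
def FreeChoosable {V : Type*} (G : SimpleGraph V) (a b c : ℕ) : Prop :=
  ∀ L : V → Finset ℕ, (∀ v, (L v).card = a) →
    (∀ u v, G.Adj u v → (L u ∩ L v).card ≤ c) →
    ∀ (v₀ : V) (C : Finset ℕ), C ⊆ L v₀ → C.card = b →
      ∃ φ, IsLbColoring G L b φ ∧ φ v₀ = C

/-- The separation number `sep(G,a,b)`: the largest `c ≤ a` such that `G` is
`(a,b,c)`-choosable. -/
noncomputable def sep {V : Type*} (G : SimpleGraph V) (a b : ℕ) : ℕ :=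
  sSup {c | c ≤ a ∧ Choosable G a b c}

/-- The free-separation number `fsep(G,a,b)`: the largest `c ≤ a` such that `G` is
`(a,b,c)`-free-choosable. -/
noncomputable def fsep {V : Type*} (G : SimpleGraph V) (a b : ℕ) : ℕ :=
  sSup {c | c ≤ a ∧ FreeChoosable G a b c}

/-- `⌊c(n,a,b)⌋` where `c(n,a,b) = (n-1)(a-b)/n` if `(n-1)a < (2n-1)b` and
`c(n,a,b) = ((n-1)(a-b) - 2b)/(n-2)` otherwise (here `b ≤ a ≤ 2(n+1)b/n`, so natural
subtraction and natural division agree with the real values and the floor). -/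
def cFloor (n a b : ℕ) : ℕ :=
  if (n - 1) * a < (2 * n - 1) * b then (n - 1) * (a - b) / n
  else ((n - 1) * (a - b) - 2 * b) / (n - 2)

lemma exists_pick (b : ℕ) (S A : Finset ℕ) (hb : b ≤ S.card) :
    ∃ P, P ⊆ S ∧ P.card = b ∧ (P ∩ A).card ≤ b - (S \ A).card := by
  obtain ⟨U, hUS, hUcard⟩ := Finset.exists_subset_card_eq
    (min_le_right b (S \ A).card)
  obtain ⟨P, hUP, hPS, hPcard⟩ := Finset.exists_subsuperset_card_eq
    (hUS.trans sdiff_subset) (by rw [hUcard]; exact min_le_left _ _) hb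
  refine ⟨P, hPS, hPcard, ?_⟩
  have hsub : P ∩ A ⊆ P \ U := by
    intro x hx
    rw [mem_inter] at hx
    rw [mem_sdiff]
    refine ⟨hx.1, fun hxU => ?_⟩
    have := hUS hxU
    rw [mem_sdiff] at this
    exact this.2 hx.2
  have h1 : (P ∩ A).card ≤ P.card - U.card :=
    le_trans (card_le_card hsub) (le_of_eq (card_sdiff_of_subset hUP))
  rw [hPcard, hUcard] at h1
  omega

noncomputable def pickSet (b : ℕ) (S A : Finset ℕ) : Finset ℕ :=
  if h : b ≤ S.card then (exists_pick b S A h).choose else ∅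

lemma pickSet_spec (b : ℕ) (S A : Finset ℕ) (h : b ≤ S.card) :
    pickSet b S A ⊆ S ∧ (pickSet b S A).card = b ∧
      ((pickSet b S A) ∩ A).card ≤ b - (S \ A).card := by
  rw [pickSet, dif_pos h]
  exact (exists_pick b S A h).choose_spec

noncomputable def seqc (LL : ℕ → Finset ℕ) (b n : ℕ) : ℕ → Finset ℕ
  | 0 => LL 0
  | (i+1) => if i + 1 = n then LL n else pickSet b (LL (i+1) \ seqc LL b n i) (LL (i+2))

lemma seqc_zero (LL : ℕ → Finset ℕ) (b n : ℕ) : seqc LL b n 0 = LL 0 := rfl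

lemma seqc_last (LL : ℕ → Finset ℕ) (b n : ℕ) (hn : 0 < n) : seqc LL b n n = LL n := by
  obtain ⟨k, rfl⟩ : ∃ k, n = k + 1 := ⟨n - 1, by omega⟩
  simp [seqc]

lemma seqc_succ (LL : ℕ → Finset ℕ) (b n i : ℕ) (h : i + 1 ≠ n) :
    seqc LL b n (i+1) = pickSet b (LL (i+1) \ seqc LL b n i) (LL (i+2)) := by
  simp [seqc, h]

lemma cFloor_facts (n a b : ℕ) (hn : 3 ≤ n) (hba : b ≤ a) (h : n * a < 2 * (n + 1) * b) :
    cFloor n a b ≤ a - b ∧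
      2 * min b (cFloor n a b) ≤ (a - b) + (n - 2) * (a - b - cFloor n a b) := by
  have ha3 : a < 3 * b := by
    by_contra hc'
    push_neg at hc'
    have h1 : n * (3 * b) ≤ n * a := Nat.mul_le_mul_left n hc'
    have h4 : 3 * b ≤ n * b := Nat.mul_le_mul_right b hn
    nlinarith
  by_cases hlt : (n - 1) * a < (2 * n - 1) * b
  · have hcdef : cFloor n a b = (n - 1) * (a - b) / n := by rw [cFloor, if_pos hlt]
    have hdiv : n * cFloor n a b ≤ (n - 1) * (a - b) := by
      rw [hcdef, Nat.mul_comm]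
      exact Nat.div_mul_le_self _ _
    have hc1 : cFloor n a b ≤ a - b := by
      have h2 : n * cFloor n a b ≤ n * (a - b) := by
        refine le_trans hdiv ?_
        exact Nat.mul_le_mul_right _ (by omega)
      exact Nat.le_of_mul_le_mul_left h2 (by omega)
    refine ⟨hc1, ?_⟩
    have hm : min b (cFloor n a b) ≤ cFloor n a b := min_le_right _ _
    zify [hba, hc1, show 1 ≤ n from by omega, show 2 ≤ n from by omega] at hdiv ⊢
    linarith
  · push_neg at hlt
    have hcdef : cFloor n a b = ((n - 1) * (a - b) - 2 * b) / (n - 2) := by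
      rw [cFloor, if_neg (by omega)]
    have hnb : 3 * b ≤ n * b := Nat.mul_le_mul_right b hn
    have h2b : 2 * b ≤ (n - 1) * (a - b) := by
      zify [hba, show 1 ≤ n from by omega, show 1 ≤ 2 * n from by omega] at hlt hnb ⊢
      linarith
    have hdiv : (n - 2) * cFloor n a b ≤ (n - 1) * (a - b) - 2 * b := by
      rw [hcdef, Nat.mul_comm]
      exact Nat.div_mul_le_self _ _
    have hc1 : cFloor n a b ≤ a - b := by
      by_contra h'
      push_neg at h'
      have hmul : (n - 2) * (a - b + 1) ≤ (n - 2) * cFloor n a b :=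
        Nat.mul_le_mul_left _ (by omega)
      zify [hba, h2b, show 1 ≤ n from by omega, show 2 ≤ n from by omega] at hmul hdiv
      nlinarith
    refine ⟨hc1, ?_⟩
    have hm : min b (cFloor n a b) ≤ b := min_le_left _ _
    zify [hba, hc1, h2b, show 1 ≤ n from by omega, show 2 ≤ n from by omega] at hdiv ⊢
    linarith


lemma seqc_main (n a b c : ℕ) (LL : ℕ → Finset ℕ) (hn : 3 ≤ n) (hba : b ≤ a)
    (hc1 : c ≤ a - b) (hfin : 2 * min b c ≤ (a - b) + (n - 2) * (a - b - c))
    (hcard0 : (LL 0).card = b) (hcardn : (LL n).card = b)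
    (hcardi : ∀ j, 0 < j → j < n → (LL j).card = a)
    (hsep' : ∀ j, j + 1 ≤ n → (LL j ∩ LL (j + 1)).card ≤ c) :
    ∀ i, i ≤ n - 1 →
      seqc LL b n i ⊆ LL i ∧ (seqc LL b n i).card = b ∧
        (seqc LL b n i ∩ LL (i + 1)).card ≤ min b c - i * (a - b - c) ∧
        (∀ j, i = j + 1 → seqc LL b n i ∩ seqc LL b n j = ∅) ∧
        (i = n - 1 → seqc LL b n i ∩ LL n = ∅) := by
  set f := seqc LL b n with hfdef
  have hmb : min b c ≤ b := min_le_left _ _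
  have hmc : min b c ≤ c := min_le_right _ _
  intro i
  induction i with
  | zero =>
    intro _
    have hf0 : f 0 = LL 0 := rfl
    refine ⟨le_of_eq hf0, by rw [hf0]; exact hcard0, ?_,
      fun j hj => absurd hj (by omega), fun h0 => absurd h0 (by omega)⟩
    rw [hf0]
    have hb1 : (LL 0 ∩ LL 1).card ≤ b := by
      refine le_trans (card_le_card inter_subset_left) (le_of_eq hcard0)
    have hb2 : (LL 0 ∩ LL (0 + 1)).card ≤ c := hsep' 0 (by omega)
    simp only [Nat.zero_mul, Nat.sub_zero]
    exact le_min (by simpa using hb1) hb2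
  | succ i ih =>
    intro hi1
    have hin : i + 1 ≠ n := by omega
    obtain ⟨ihsub, ihcard, ihe, _, _⟩ := ih (by omega)
    have hfS1 : f (i + 1) = pickSet b (LL (i + 1) \ f i) (LL (i + 2)) :=
      seqc_succ LL b n i hin
    have hcardLi : (LL (i + 1)).card = a := hcardi (i + 1) (by omega) (by omega)
    have hpool : (LL (i + 1) \ f i).card + (LL (i + 1) ∩ f i).card = (LL (i + 1)).card :=
      card_sdiff_add_card_inter _ _
    have hinter : (LL (i + 1) ∩ f i).card = (f i ∩ LL (i + 1)).card := by rw [inter_comm]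
    have hee : (f i ∩ LL (i + 1)).card ≤ min b c := le_trans ihe (Nat.sub_le _ _)
    have hb_le : b ≤ (LL (i + 1) \ f i).card := by omega
    obtain ⟨hPsub, hPcard, hPbound⟩ := pickSet_spec b (LL (i + 1) \ f i) (LL (i + 2)) hb_le
    rw [← hfS1] at hPsub hPcard hPbound
    have hcover : (LL (i + 1)).card ≤ ((LL (i + 1) \ f i) \ LL (i + 2)).card +
        ((LL (i + 1) ∩ LL (i + 2)).card + (f i ∩ LL (i + 1)).card) := by
      refine le_trans (card_le_card (?_ :
        LL (i + 1) ⊆ ((LL (i + 1) \ f i) \ LL (i + 2)) ∪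
          ((LL (i + 1) ∩ LL (i + 2)) ∪ (f i ∩ LL (i + 1))))) ?_
      · intro x hx
        simp only [mem_union, mem_sdiff, mem_inter]
        by_cases hA : x ∈ LL (i + 2)
        · exact Or.inr (Or.inl ⟨hx, hA⟩)
        · by_cases hF : x ∈ f i
          · exact Or.inr (Or.inr ⟨hF, hx⟩)
          · exact Or.inl ⟨⟨hx, hF⟩, hA⟩
      · exact le_trans (card_union_le _ _) (by gcongr; exact card_union_le _ _)
    have hci : (LL (i + 1) ∩ LL (i + 2)).card ≤ c := hsep' (i + 1) (by omega)
    have hdisj : ∀ j, i + 1 = j + 1 → f (i + 1) ∩ f j = ∅ := by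
      intro j hj
      have : j = i := by omega
      subst this
      rw [← disjoint_iff_inter_eq_empty]
      exact disjoint_left.mpr fun x hx => (mem_sdiff.mp (hPsub hx)).2
    have hegen : (f (i + 1) ∩ LL (i + 2)).card ≤ min b c - (i + 1) * (a - b - c) := by
      have hsucc : (i + 1) * (a - b - c) = i * (a - b - c) + (a - b - c) := by ring
      obtain ⟨K, hK⟩ : ∃ K, i * (a - b - c) = K := ⟨_, rfl⟩
      rw [hK] at ihe hsucc
      rw [hsucc]
      omega
    refine ⟨hPsub.trans sdiff_subset, hPcard, hegen, hdisj, ?_⟩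
    intro h5
    have hi2 : i + 2 = n := by omega
    have hcib : (LL (i + 1) ∩ LL (i + 2)).card ≤ b := by
      refine le_trans (card_le_card inter_subset_right) ?_
      rw [hi2, hcardn]
    have hKR : i * (a - b - c) = (n - 2) * (a - b - c) := by
      rw [show i = n - 2 from by omega]
    rw [hKR] at ihe
    obtain ⟨R, hR⟩ : ∃ R, (n - 2) * (a - b - c) = R := ⟨_, rfl⟩
    rw [hR] at ihe hfin
    have hzero : (f (i + 1) ∩ LL (i + 2)).card = 0 := by omega
    rw [← hi2]
    exact card_eq_zero.mp hzero

theorem path_colorable_of_sep_le_cFloor (n a b : ℕ) (hn : 3 ≤ n) (hba : b ≤ a)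
    (h : n * a < 2 * (n + 1) * b) (L : Fin (n + 1) → Finset ℕ)
    (h1 : (L 0).card = b) (h2 : (L (Fin.last n)).card = b)
    (ha : ∀ i : Fin (n + 1), 0 < i.val → i.val < n → (L i).card = a)
    (hsep : ∀ u v, (pathGraph (n + 1)).Adj u v → (L u ∩ L v).card ≤ cFloor n a b) :
    ∃ φ, IsLbColoring (pathGraph (n + 1)) L b φ := by
  obtain ⟨hc1, hfin⟩ := cFloor_facts n a b hn hba h
  obtain ⟨LL, hLLv⟩ : ∃ LL : ℕ → Finset ℕ, ∀ (j : ℕ) (hj : j < n + 1), LL j = L ⟨j, hj⟩ :=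
    ⟨fun j => if hj : j < n + 1 then L ⟨j, hj⟩ else ∅, fun j hj => dif_pos hj⟩
  have hLLeq : ∀ v : Fin (n + 1), LL v.val = L v := fun v => hLLv v.val v.isLt
  have hcard0 : (LL 0).card = b := by rw [hLLv 0 (by omega)]; exact h1
  have hcardn : (LL n).card = b := by rw [hLLv n (by omega)]; exact h2
  have hcardi : ∀ j, 0 < j → j < n → (LL j).card = a := by
    intro j hj1 hj2
    rw [hLLv j (by omega)]
    exact ha ⟨j, by omega⟩ hj1 hj2
  have hsep' : ∀ j, j + 1 ≤ n → (LL j ∩ LL (j + 1)).card ≤ cFloor n a b := by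
    intro j hj
    rw [hLLv j (by omega), hLLv (j + 1) (by omega)]
    exact hsep _ _ (pathGraph_adj.mpr (Or.inl rfl))
  have main := seqc_main n a b (cFloor n a b) LL hn hba hc1 hfin hcard0 hcardn hcardi hsep'
  have hfn : seqc LL b n n = LL n := seqc_last LL b n (by omega)
  refine ⟨fun v => seqc LL b n v.val, ⟨?_, ?_⟩⟩
  · intro v
    by_cases hv : v.val = n
    · have hveq : L v = LL n := by rw [← hLLeq v, hv]
      constructor
      · show seqc LL b n v.val ⊆ L v
        rw [hv, hfn, hveq]
      · show (seqc LL b n v.val).card = b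
        rw [hv, hfn, hcardn]
    · have hvn : v.val ≤ n - 1 := by have := v.isLt; omega
      obtain ⟨hsub, hcard, _, _, _⟩ := main v.val hvn
      exact ⟨by show seqc LL b n v.val ⊆ L v; rw [← hLLeq v]; exact hsub, hcard⟩
  · have key2 : ∀ u v : Fin (n + 1), u.val + 1 = v.val →
        seqc LL b n v.val ∩ seqc LL b n u.val = ∅ := by
      intro u v huv
      by_cases hv : v.val = n
      · have hu : u.val = n - 1 := by omega
        rw [hv, hu, hfn, inter_comm]
        exact (main (n - 1) le_rfl).2.2.2.2 rfl
      · have hvn : v.val ≤ n - 1 := by have := v.isLt; omega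
        exact (main v.val hvn).2.2.2.1 u.val huv.symm
    intro u v huv
    show seqc LL b n u.val ∩ seqc LL b n v.val = ∅
    rcases pathGraph_adj.mp huv with h' | h'
    · rw [inter_comm]
      exact key2 u v h'
    · exact key2 v u h'
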